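/- For all n ≥ 1 and k ≥ 1, let S denote the sum of the entries of the flip sequence σ^k_n. Then the average flip length of the cyclic Gray code satisfies (S + n)/(k^n·n!) = Σ_{j=0}^{n−1} 1/(k^j·j!). -/

import Mathlib

/-- The flip sequence `σ^k_n`: `σ^k_1` consists of `k-1` ones and, for `n > 1`,
`σ^k_n = (σ^k_{n-1}, n)` repeated `kn - 1` times followed by one final copy of `σ^k_{n-1}`. -/
def sigmaSeq (k : ℕ) : ℕ → List ℕ
  | 0 => []
  | 1 => List.replicate (k - 1) 1
  | n + 2 => (List.replicate (k * (n + 2) - 1) (sigmaSeq k (n + 1) ++ [n + 2])).flatten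
      ++ sigmaSeq k (n + 1)

lemma sigmaSeq_sum_succ (k n : ℕ) :
    (sigmaSeq k (n + 2)).sum
      = (k * (n + 2) - 1) * ((sigmaSeq k (n + 1)).sum + (n + 2)) + (sigmaSeq k (n + 1)).sum := by
  simp [sigmaSeq, List.sum_flatten, List.map_replicate, List.sum_replicate, smul_eq_mul]

/-- For `n,k ≥ 1`, if `S` is the sum of the entries of `σ^k_n`, then
the average flip length of the cyclic Gray code satisfies
`(S + n)/(kⁿ·n!) = Σ_{j=0}^{n-1} 1/(k^j·j!)`. -/
theorem average_flip_length (n k : ℕ) (hn : 1 ≤ n) (hk : 1 ≤ k) :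
    (((sigmaSeq k n).sum : ℚ) + n) / ((k : ℚ) ^ n * (n.factorial : ℚ)) =
      ∑ j ∈ Finset.range n, 1 / ((k : ℚ) ^ j * (j.factorial : ℚ)) := by
  have hkq : (k : ℚ) ≠ 0 := by positivity
  induction n, hn using Nat.le_induction with
  | base =>
      simp [sigmaSeq, List.sum_replicate, smul_eq_mul, Nat.cast_sub hk]
      omega
  | succ n hn ih =>
      have hrec := sigmaSeq_sum_succ k (n - 1)
      rw [show n - 1 + 2 = n + 1 by omega, show n - 1 + 1 = n by omega] at hrec
      have h1 : 1 ≤ k * (n + 1) := Nat.one_le_iff_ne_zero.mpr (by positivity)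
      have keyN : (sigmaSeq k (n + 1)).sum + (n + 1)
          = k * (n + 1) * ((sigmaSeq k n).sum + (n + 1)) := by
        rw [hrec]
        obtain ⟨c, hc⟩ := Nat.exists_eq_add_of_le h1
        rw [show k * (n + 1) - 1 = c by omega, hc]
        ring
      have keyQ : ((sigmaSeq k (n + 1)).sum : ℚ) + ((n : ℚ) + 1)
          = (k : ℚ) * ((n : ℚ) + 1) * (((sigmaSeq k n).sum : ℚ) + ((n : ℚ) + 1)) := by
        exact_mod_cast keyN
      rw [Finset.sum_range_succ, ← ih]
      have hfz : ((n).factorial : ℚ) ≠ 0 := by exact_mod_cast n.factorial_ne_zero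
      have hnz : ((n : ℚ) + 1) ≠ 0 := by positivity
      rw [show ((n + 1 : ℕ) : ℚ) = (n : ℚ) + 1 by push_cast; ring, keyQ,
        show (((n + 1).factorial : ℕ) : ℚ) = ((n : ℚ) + 1) * (n.factorial : ℚ) by
          rw [Nat.factorial_succ]; push_cast; ring, pow_succ]
      field_simp
      ring
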